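/- Let $p$ be odd and $G$ an $s$-extraspecial $p$-group of order $p^{(2r+1)s}$ with $r \ge 2$. Then $G$ is unicentral, i.e., the epicenter of $G$ equals its center; consequently $G$ is not capable. -/

import Mathlib

universe u

/-- A group is capable if it is `E/Z(E)` for some group `E`. -/
def IsCapable (H : Type u) [Group H] : Prop :=
  ∃ (E : Type u) (instE : Group E),
    letI := instE
    Nonempty (H ≃* E ⧸ Subgroup.center E)

/-- The epicenter `Z^*(G)`: the smallest central subgroup `Z` with `G/Z` capable. -/
def epicenter (G : Type u) [Group G] : Subgroup G :=
  sInf {Z : Subgroup G | ∃ hn : Z.Normal, Z ≤ Subgroup.center G ∧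
    (letI := hn; IsCapable (G ⧸ Z))}

/-- A finite `p`-group `G` is `s`-extraspecial if `G' = Z(G)` is cyclic of order `p^s`
and `G/G'` is homocyclic of exponent `p^s`. -/
def IsSExtraspecial (p s : ℕ) (G : Type u) [Group G] : Prop :=
  commutator G = Subgroup.center G ∧ IsCyclic ↥(commutator G) ∧
    Nat.card ↥(commutator G) = p ^ s ∧
    ∃ k : ℕ, Nonempty (Abelianization G ≃* Multiplicative (Fin k → ZMod (p ^ s)))

open scoped commutatorElement

/-- Let `p` be odd and `G` an `s`-extraspecial `p`-group of order `p^((2r+1)s)` with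
`r ≥ 2`.  Then `G` is unicentral (`Z^*(G) = Z(G)`); consequently `G` is not capable. -/


lemma zmod_eq_unit_mul_pow {p s : ℕ} (hp : p.Prime) (x : ZMod (p ^ s)) :
    ∃ (u : (ZMod (p ^ s))ˣ) (j : ℕ), x = (u : ZMod (p ^ s)) * (p : ZMod (p ^ s)) ^ j := by
  haveI : NeZero (p ^ s) := ⟨pow_ne_zero _ hp.ne_zero⟩
  rcases eq_or_ne x 0 with rfl | hx
  · exact ⟨1, s, by simp [← Nat.cast_pow, ZMod.natCast_self]⟩
  · set n := x.val with hn
    have hn0 : n ≠ 0 := by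
      simpa [hn, ZMod.val_eq_zero] using hx
    set j := n.factorization p with hj
    have hfac : p ^ j * (n / p ^ j) = n := Nat.ordProj_mul_ordCompl_eq_self n p
    have hnd : ¬ p ∣ (n / p ^ j) := Nat.not_dvd_ordCompl hp hn0
    have hcop : Nat.Coprime (n / p ^ j) (p ^ s) :=
      Nat.Coprime.pow_right _ ((Nat.Prime.coprime_iff_not_dvd hp).mpr hnd).symm
    refine ⟨ZMod.unitOfCoprime _ hcop, j, ?_⟩
    have hx' : ((n : ℕ) : ZMod (p ^ s)) = x := by
      rw [hn, ZMod.natCast_val, ZMod.cast_id]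
    rw [← hx']
    conv_lhs => rw [← hfac]
    push_cast
    rw [ZMod.coe_unitOfCoprime]
    ring

lemma zmod_dvd_total {p s : ℕ} (hp : p.Prime) (x y : ZMod (p ^ s)) : x ∣ y ∨ y ∣ x := by
  have key : ∀ (u v : (ZMod (p ^ s))ˣ) (j l : ℕ), j ≤ l →
      (u : ZMod (p ^ s)) * (p : ZMod (p ^ s)) ^ j ∣ (v : ZMod (p ^ s)) * (p : ZMod (p ^ s)) ^ l := by
    intro u v j l hjl
    refine ⟨(↑u⁻¹ : ZMod (p ^ s)) * v * (p : ZMod (p ^ s)) ^ (l - j), ?_⟩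
    have h1 : (p : ZMod (p ^ s)) ^ j * (p : ZMod (p ^ s)) ^ (l - j) = (p : ZMod (p ^ s)) ^ l :=
      pow_mul_pow_sub _ hjl
    have h2 : (u : ZMod (p ^ s)) * (↑u⁻¹ : ZMod (p ^ s)) = 1 := u.mul_inv
    calc (v : ZMod (p ^ s)) * (p : ZMod (p ^ s)) ^ l
        = ((u : ZMod (p ^ s)) * (↑u⁻¹ : ZMod (p ^ s))) * (v : ZMod (p ^ s)) *
          ((p : ZMod (p ^ s)) ^ j * (p : ZMod (p ^ s)) ^ (l - j)) := by rw [h1, h2]; ring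
      _ = ↑u * (p : ZMod (p ^ s)) ^ j * (↑u⁻¹ * ↑v * (p : ZMod (p ^ s)) ^ (l - j)) := by ring
  obtain ⟨u, j, rfl⟩ := zmod_eq_unit_mul_pow hp x
  obtain ⟨v, l, rfl⟩ := zmod_eq_unit_mul_pow hp y
  rcases le_total j l with h | h
  · exact Or.inl (key u v j l h)
  · exact Or.inr (key v u l j h)


lemma exists_dvd_all {R : Type*} [CommRing R] (htot : ∀ x y : R, x ∣ y ∨ y ∣ x)
    {ι : Type*} (S : Finset ι) (hS : S.Nonempty) (f : ι → R) :
    ∃ i ∈ S, ∀ j ∈ S, f i ∣ f j := by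
  classical
  induction S using Finset.induction_on with
  | empty => exact absurd hS (by simp)
  | @insert a S ha ih =>
    rcases S.eq_empty_or_nonempty with rfl | hS'
    · exact ⟨a, by simp, by simp⟩
    · obtain ⟨i, hiS, hi⟩ := ih hS'
      rcases htot (f a) (f i) with h | h
      · exact ⟨a, Finset.mem_insert_self _ _, fun j hj => by
          rcases Finset.mem_insert.mp hj with rfl | hj
          · exact dvd_rfl
          · exact h.trans (hi j hj)⟩
      · exact ⟨i, Finset.mem_insert_of_mem hiS, fun j hj => by
          rcases Finset.mem_insert.mp hj with rfl | hj
          · exact h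
          · exact hi j hj⟩

lemma sum_two_supp {R : Type*} [CommRing R] {n : ℕ} {i j : Fin n} (hij : i ≠ j) (A B : R) :
    (∑ l, (if l = i then A else if l = j then B else 0)) = A + B := by
  classical
  have : ∀ l : Fin n, (if l = i then A else if l = j then B else 0)
      = (if l = i then A else 0) + (if l = j then B else 0) := by
    intro l
    rcases eq_or_ne l i with rfl | hli
    · simp [if_neg (hij ∘ Eq.symm ∘ Eq.symm), hij]
    · simp [hli]
  rw [Finset.sum_congr rfl fun l _ => this l, Finset.sum_add_distrib]
  simp [Finset.sum_ite_eq']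

lemma construct_vectors {R : Type*} [CommRing R] (htot : ∀ x y : R, x ∣ y ∨ y ∣ x)
    {n : ℕ} (hn : 3 ≤ n) (w yv : Fin n → R) :
    ∃ a c : Fin n → R,
      (∑ l, a l * w l) = 0 ∧ (∑ l, c l * yv l) = 0 ∧ (∑ l, a l * c l) = 1 := by
  classical
  haveI : Nonempty (Fin n) := Fin.pos_iff_nonempty.mp (by omega)
  obtain ⟨μ, -, hμ⟩ := exists_dvd_all htot Finset.univ Finset.univ_nonempty yv
  have h1 : (Finset.univ.erase μ).Nonempty := by
    rw [← Finset.card_pos, Finset.card_erase_of_mem (Finset.mem_univ _), Finset.card_univ,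
      Fintype.card_fin]
    omega
  obtain ⟨j, hjmem, hj⟩ := exists_dvd_all htot (Finset.univ.erase μ) h1 w
  have hjμ : j ≠ μ := (Finset.mem_erase.mp hjmem).1
  have h2 : ((Finset.univ.erase μ).erase j).Nonempty := by
    rw [← Finset.card_pos, Finset.card_erase_of_mem (Finset.mem_erase.mpr ⟨hjμ, Finset.mem_univ _⟩),
      Finset.card_erase_of_mem (Finset.mem_univ _), Finset.card_univ, Fintype.card_fin]
    omega
  obtain ⟨i, himem⟩ := h2
  have hij : i ≠ j := (Finset.mem_erase.mp himem).1
  have hiμ : i ≠ μ := (Finset.mem_erase.mp (Finset.mem_erase.mp himem).2).1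
  obtain ⟨t, ht⟩ : yv μ ∣ yv i := hμ i (Finset.mem_univ _)
  obtain ⟨d, hd⟩ : w j ∣ w i := hj i (Finset.mem_erase.mpr ⟨hiμ, Finset.mem_univ _⟩)
  refine ⟨fun l => if l = i then 1 else if l = j then -d else 0,
          fun l => if l = i then 1 else if l = μ then -t else 0, ?_, ?_, ?_⟩
  · have : ∀ l : Fin n, (if l = i then (1:R) else if l = j then -d else 0) * w l
        = (if l = i then w i else if l = j then -(d * w j) else 0) := by
      intro l
      rcases eq_or_ne l i with rfl | hli
      · simp
      · rcases eq_or_ne l j with rfl | hlj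
        · simp [hli]
        · simp [hli, hlj]
    rw [Finset.sum_congr rfl fun l _ => this l, sum_two_supp hij]
    rw [hd]; ring
  · have : ∀ l : Fin n, (if l = i then (1:R) else if l = μ then -t else 0) * yv l
        = (if l = i then yv i else if l = μ then -(t * yv μ) else 0) := by
      intro l
      rcases eq_or_ne l i with rfl | hli
      · simp
      · rcases eq_or_ne l μ with rfl | hlμ
        · simp [hli]
        · simp [hli, hlμ]
    rw [Finset.sum_congr rfl fun l _ => this l, sum_two_supp hiμ]
    rw [ht]; ring
  · have : ∀ l : Fin n, ((if l = i then (1:R) else if l = j then -d else 0) *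
        (if l = i then 1 else if l = μ then -t else 0))
        = (if l = i then 1 else 0) := by
      intro l
      rcases eq_or_ne l i with rfl | hli
      · simp
      · rcases eq_or_ne l j with rfl | hlj
        · simp [hli, hjμ]
        · simp [hli, hlj]
    rw [Finset.sum_congr rfl fun l _ => this l]
    simp


lemma commutator_central_left {E : Type*} [Group E] (u a b : E) (hu : ∀ x, Commute u x) :
    ⁅u * a, b⁆ = ⁅a, b⁆ := by
  have h : u * (a * b * a⁻¹) * u⁻¹ = a * b * a⁻¹ := by
    rw [(hu _).eq]; group
  calc ⁅u * a, b⁆ = u * (a * b * a⁻¹) * u⁻¹ * b⁻¹ := by group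
    _ = a * b * a⁻¹ * b⁻¹ := by rw [h]
    _ = ⁅a, b⁆ := by group

lemma commutator_central_right {E : Type*} [Group E] (v a b : E) (hv : ∀ x, Commute v x) :
    ⁅a, v * b⁆ = ⁅a, b⁆ := by
  have h : v * (b * a⁻¹ * b⁻¹) * v⁻¹ = b * a⁻¹ * b⁻¹ := by
    rw [(hv _).eq]; group
  calc ⁅a, v * b⁆ = a * (v * (b * a⁻¹ * b⁻¹) * v⁻¹) := by group
    _ = a * (b * a⁻¹ * b⁻¹) := by rw [h]
    _ = ⁅a, b⁆ := by group

lemma commute_commutator_of_central {E : Type*} [Group E] {a b e : E}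
    (ha : ⁅a, e⁆ ∈ Subgroup.center E) (hb : ⁅b, e⁆ ∈ Subgroup.center E) :
    Commute ⁅a, b⁆ e := by
  have hu : ∀ x, Commute ⁅a, e⁆ x := fun x => ((Subgroup.mem_center_iff.mp ha) x).symm
  have hv : ∀ x, Commute ⁅b, e⁆ x := fun x => ((Subgroup.mem_center_iff.mp hb) x).symm
  have hA : e⁻¹ * a * e = ⁅a, e⁆ * a := by
    have h1 : e * (⁅a, e⁆ * a) = a * e := by
      rw [← mul_assoc, ← (hu e).eq]
      group
    calc e⁻¹ * a * e = e⁻¹ * (a * e) := by group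
      _ = e⁻¹ * (e * (⁅a, e⁆ * a)) := by rw [h1]
      _ = ⁅a, e⁆ * a := by group
  have hB : e⁻¹ * b * e = ⁅b, e⁆ * b := by
    have h1 : e * (⁅b, e⁆ * b) = b * e := by
      rw [← mul_assoc, ← (hv e).eq]
      group
    calc e⁻¹ * b * e = e⁻¹ * (b * e) := by group
      _ = e⁻¹ * (e * (⁅b, e⁆ * b)) := by rw [h1]
      _ = ⁅b, e⁆ * b := by group
  have key : e⁻¹ * ⁅a, b⁆ * e = ⁅a, b⁆ := by
    calc e⁻¹ * ⁅a, b⁆ * e = ⁅e⁻¹ * a * e, e⁻¹ * b * e⁆ := by group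
      _ = ⁅⁅a, e⁆ * a, ⁅b, e⁆ * b⁆ := by rw [hA, hB]
      _ = ⁅a, ⁅b, e⁆ * b⁆ := commutator_central_left _ _ _ hu
      _ = ⁅a, b⁆ := commutator_central_right _ _ _ hv
  calc ⁅a, b⁆ * e = e * (e⁻¹ * ⁅a, b⁆ * e) := by group
    _ = e * ⁅a, b⁆ := by rw [key]



section helpers
variable {E : Type*} [Group E]

lemma comm_mul_left_central {x x' y : E} (hc : ∀ g, Commute ⁅x', y⁆ g) :
    ⁅x * x', y⁆ = ⁅x, y⁆ * ⁅x', y⁆ := by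
  have h : x * ⁅x', y⁆ * x⁻¹ = ⁅x', y⁆ := by rw [← (hc x).eq]; group
  calc ⁅x * x', y⁆ = x * ⁅x', y⁆ * x⁻¹ * ⁅x, y⁆ := by group
    _ = ⁅x', y⁆ * ⁅x, y⁆ := by rw [h]
    _ = ⁅x, y⁆ * ⁅x', y⁆ := (hc _).eq

lemma comm_mul_right_central {x y y' : E} (hc : ∀ g, Commute ⁅x, y'⁆ g) :
    ⁅x, y * y'⁆ = ⁅x, y⁆ * ⁅x, y'⁆ := by
  have h : y * ⁅x, y'⁆ * y⁻¹ = ⁅x, y'⁆ := by rw [← (hc y).eq]; group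
  calc ⁅x, y * y'⁆ = ⁅x, y⁆ * (y * ⁅x, y'⁆ * y⁻¹) := by group
    _ = ⁅x, y⁆ * ⁅x, y'⁆ := by rw [h]

lemma comm_mul_d_left {x y d : E} (hd : ∀ g, Commute d g) :
    ⁅x * d, y⁆ = ⁅x, y⁆ := by
  have h : d * y * d⁻¹ = y := by rw [(hd _).eq]; group
  calc ⁅x * d, y⁆ = x * (d * y * d⁻¹) * x⁻¹ * y⁻¹ := by group
    _ = ⁅x, y⁆ := by rw [h]; group

lemma comm_mul_d_right {x y d : E} (hd : ∀ g, Commute d g) :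
    ⁅x, y * d⁆ = ⁅x, y⁆ := by
  have h : d * x⁻¹ * d⁻¹ = x⁻¹ := by rw [(hd _).eq]; group
  calc ⁅x, y * d⁆ = x * y * (d * x⁻¹ * d⁻¹) * y⁻¹ := by group
    _ = ⁅x, y⁆ := by rw [h]; group

end helpers


lemma addHom_eval {k m : ℕ} [NeZero m] (f : (Fin k → ZMod m) →+ ZMod m) (u : Fin k → ZMod m) :
    f u = ∑ i, u i * f (fun j => if i = j then 1 else 0) := by
  conv_lhs => rw [pi_eq_sum_univ u]
  rw [map_sum]
  refine Finset.sum_congr rfl fun i _ => ?_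
  have hval : (((u i).val : ℕ) : ZMod m) = u i := ZMod.natCast_rightInverse (u i)
  calc f ((u i) • fun j => if i = j then (1 : ZMod m) else 0)
      = f ((((u i).val : ℕ) : ZMod m) • fun j => if i = j then (1 : ZMod m) else 0) := by
        rw [hval]
    _ = f (((u i).val : ℕ) • fun j => if i = j then (1 : ZMod m) else 0) := by
        rw [Nat.cast_smul_eq_nsmul]
    _ = ((u i).val : ℕ) • f (fun j => if i = j then (1 : ZMod m) else 0) := map_nsmul f _ _
    _ = (((u i).val : ℕ) : ZMod m) * f (fun j => if i = j then 1 else 0) := nsmul_eq_mul _ _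
    _ = u i * f (fun j => if i = j then 1 else 0) := by rw [hval]

lemma capable_obstruction {H : Type u} [Group H] (hH : IsCapable H) (z : H)
    (h : ∀ y : H, ∃ a b : H, ⁅a, y⁆ = 1 ∧ ⁅b, y⁆ = 1 ∧ ⁅a, b⁆ = z) : z = 1 := by
  obtain ⟨E, instE, ⟨θ⟩⟩ := hH
  letI := instE
  set π : E →* E ⧸ Subgroup.center E := QuotientGroup.mk' (Subgroup.center E) with hπ
  have hsurj : Function.Surjective π := QuotientGroup.mk'_surjective _
  obtain ⟨z', hz'⟩ := hsurj (θ z)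
  have hz'center : z' ∈ Subgroup.center E := by
    rw [Subgroup.mem_center_iff]
    intro e
    obtain ⟨a, b, hay, hby, hab⟩ := h (θ.symm (π e))
    obtain ⟨a', ha'⟩ := hsurj (θ a)
    obtain ⟨b', hb'⟩ := hsurj (θ b)
    have haE : ⁅a', e⁆ ∈ Subgroup.center E := by
      rw [← QuotientGroup.ker_mk' (Subgroup.center E), MonoidHom.mem_ker]
      have : π ⁅a', e⁆ = θ ⁅a, θ.symm (π e)⁆ := by
        rw [map_commutatorElement, map_commutatorElement, θ.apply_symm_apply, ha']
      rw [this, hay, map_one]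
    have hbE : ⁅b', e⁆ ∈ Subgroup.center E := by
      rw [← QuotientGroup.ker_mk' (Subgroup.center E), MonoidHom.mem_ker]
      have : π ⁅b', e⁆ = θ ⁅b, θ.symm (π e)⁆ := by
        rw [map_commutatorElement, map_commutatorElement, θ.apply_symm_apply, hb']
      rw [this, hby, map_one]
    have hcomm : Commute ⁅a', b'⁆ e := commute_commutator_of_central haE hbE
    have hdiff : ⁅a', b'⁆⁻¹ * z' ∈ Subgroup.center E := by
      rw [← QuotientGroup.ker_mk' (Subgroup.center E), MonoidHom.mem_ker]
      rw [map_mul, map_inv, hz', map_commutatorElement, ha', hb', ← map_commutatorElement, hab]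
      simp
    set d := ⁅a', b'⁆⁻¹ * z' with hd
    have hz'eq : z' = ⁅a', b'⁆ * d := by rw [hd]; group
    have hdcomm : Commute d e := ((Subgroup.mem_center_iff.mp hdiff) e).symm
    have : Commute z' e := by rw [hz'eq]; exact hcomm.mul_left hdcomm
    exact this.symm.eq
  have : θ z = 1 := by
    rw [← hz']
    exact (QuotientGroup.eq_one_iff z').mpr hz'center
  have := θ.injective (by rw [this, map_one] : θ z = θ 1)
  exact this

lemma main_construction {p s k : ℕ} (hp : p.Prime) (hk : 3 ≤ k)
    {G : Type u} [Group G]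
    (hcz : commutator G = Subgroup.center G)
    (hcyc : IsCyclic ↥(commutator G))
    (hcards : Nat.card ↥(commutator G) = p ^ s)
    (ψ : Abelianization G ≃* Multiplicative (Fin k → ZMod (p ^ s)))
    (y g : G) (hg : g ∈ commutator G) :
    ∃ a b : G, ⁅a, y⁆ = 1 ∧ ⁅b, y⁆ = 1 ∧ ⁅a, b⁆ = g := by
  classical
  haveI : NeZero (p ^ s) := ⟨pow_ne_zero _ hp.ne_zero⟩
  haveI := hcyc
  -- the cyclic character
  have hcard' : Nat.card ↥(commutator G) = Nat.card (Multiplicative (ZMod (p ^ s))) := by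
    simpa [Nat.card_zmod] using hcards
  let χ : ↥(commutator G) ≃* Multiplicative (ZMod (p ^ s)) := mulEquivOfCyclicCardEq hcard'
  -- membership of commutators
  have hmem : ∀ x w : G, ⁅x, w⁆ ∈ commutator G := fun x w =>
    commutator_def G ▸ Subgroup.commutator_mem_commutator (Subgroup.mem_top x) (Subgroup.mem_top w)
  -- commutators are central
  have hcen : ∀ x w : G, ∀ g', Commute ⁅x, w⁆ g' := by
    intro x w g'
    exact ((Subgroup.mem_center_iff.mp (hcz ▸ hmem x w)) g').symm
  -- the bilinear form with values in ZMod (p^s)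
  set φ : G → G → ZMod (p ^ s) :=
    fun x w => Multiplicative.toAdd (χ ⟨⁅x, w⁆, hmem x w⟩) with hφ
  have hφ_zero : ∀ x w : G, φ x w = 0 ↔ ⁅x, w⁆ = 1 := by
    intro x w
    constructor
    · intro h
      have h0 : Multiplicative.toAdd (χ ⟨⁅x, w⁆, hmem x w⟩) = 0 := h
      have : χ ⟨⁅x, w⁆, hmem x w⟩ = 1 := by
        have := congrArg Multiplicative.ofAdd h0
        simpa using this
      have h2 : (⟨⁅x, w⁆, hmem x w⟩ : ↥(commutator G)) = 1 :=
        (MulEquiv.map_eq_one_iff χ).mp this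
      exact Subtype.ext_iff.mp h2
    · intro h
      have h2 : (⟨⁅x, w⁆, hmem x w⟩ : ↥(commutator G)) = 1 := Subtype.ext h
      show Multiplicative.toAdd (χ ⟨⁅x, w⁆, hmem x w⟩) = 0
      rw [h2, map_one, toAdd_one]
  have hφ_inj : ∀ (x w x' w' : G) (h1 : ⁅x, w⁆ ∈ commutator G) (h2 : ⁅x', w'⁆ ∈ commutator G),
      φ x w = φ x' w' → ⁅x, w⁆ = ⁅x', w'⁆ := by
    intro x w x' w' h1 h2 h
    have h' : Multiplicative.toAdd (χ ⟨⁅x, w⁆, hmem x w⟩)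
        = Multiplicative.toAdd (χ ⟨⁅x', w'⁆, hmem x' w'⟩) := h
    have h'' := χ.injective (Multiplicative.toAdd.injective h')
    exact Subtype.ext_iff.mp h''
  -- additivity
  have hφ_addl : ∀ x x' w : G, φ (x * x') w = φ x w + φ x' w := by
    intro x x' w
    have hc : ⁅x * x', w⁆ = ⁅x, w⁆ * ⁅x', w⁆ := comm_mul_left_central (hcen x' w)
    have heq : (⟨⁅x * x', w⁆, hmem _ _⟩ : ↥(commutator G))
        = ⟨⁅x, w⁆, hmem _ _⟩ * ⟨⁅x', w⁆, hmem _ _⟩ := Subtype.ext hc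
    show Multiplicative.toAdd (χ ⟨⁅x * x', w⁆, hmem _ _⟩)
        = Multiplicative.toAdd (χ ⟨⁅x, w⁆, hmem _ _⟩) + Multiplicative.toAdd (χ ⟨⁅x', w⁆, hmem _ _⟩)
    rw [heq, map_mul, toAdd_mul]
  have hφ_addr : ∀ x w w' : G, φ x (w * w') = φ x w + φ x w' := by
    intro x w w'
    have hc : ⁅x, w * w'⁆ = ⁅x, w⁆ * ⁅x, w'⁆ := comm_mul_right_central (hcen x w')
    have heq : (⟨⁅x, w * w'⁆, hmem _ _⟩ : ↥(commutator G))
        = ⟨⁅x, w⁆, hmem _ _⟩ * ⟨⁅x, w'⁆, hmem _ _⟩ := Subtype.ext hc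
    show Multiplicative.toAdd (χ ⟨⁅x, w * w'⁆, hmem _ _⟩)
        = Multiplicative.toAdd (χ ⟨⁅x, w⁆, hmem _ _⟩) + Multiplicative.toAdd (χ ⟨⁅x, w'⁆, hmem _ _⟩)
    rw [heq, map_mul, toAdd_mul]
  -- the projection to the abelianization coordinates
  set π : G →* Multiplicative (Fin k → ZMod (p ^ s)) :=
    ψ.toMonoidHom.comp Abelianization.of with hπdef
  have hofsurj : Function.Surjective (Abelianization.of : G →* Abelianization G) := by
    intro q
    exact ⟨q.out, QuotientGroup.out_eq' q⟩
  have hπsurj : Function.Surjective π := by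
    intro v
    obtain ⟨q, hq⟩ := ψ.surjective v
    obtain ⟨x, hx⟩ := hofsurj q
    exact ⟨x, by simp [hπdef, hx, hq]⟩
  have hπker : ∀ x : G, π x = 1 ↔ x ∈ commutator G := by
    intro x
    rw [hπdef]
    simp only [MonoidHom.comp_apply, MulEquiv.coe_toMonoidHom]
    rw [MulEquiv.map_eq_one_iff]
    exact QuotientGroup.eq_one_iff x
  -- independence of representatives
  have hD_left : ∀ x x' w : G, π x = π x' → φ x w = φ x' w := by
    intro x x' w h
    have hd : x⁻¹ * x' ∈ commutator G := by
      rw [← hπker]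
      rw [map_mul, map_inv, h]
      group
    have hdc : ∀ g', Commute (x⁻¹ * x') g' := fun g' =>
      ((Subgroup.mem_center_iff.mp (hcz ▸ hd)) g').symm
    have hx' : x' = x * (x⁻¹ * x') := by group
    have hcc : ⁅x', w⁆ = ⁅x, w⁆ := by
      conv_lhs => rw [hx']
      exact comm_mul_d_left hdc
    have hsub : (⟨⁅x, w⁆, hmem x w⟩ : ↥(commutator G)) = ⟨⁅x', w⁆, hmem x' w⟩ :=
      Subtype.ext hcc.symm
    show Multiplicative.toAdd (χ ⟨⁅x, w⁆, hmem x w⟩)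
        = Multiplicative.toAdd (χ ⟨⁅x', w⁆, hmem x' w⟩)
    rw [hsub]
  have hD_right : ∀ x w w' : G, π w = π w' → φ x w = φ x w' := by
    intro x w w' h
    have hd : w⁻¹ * w' ∈ commutator G := by
      rw [← hπker, map_mul, map_inv, h]
      group
    have hdc : ∀ g', Commute (w⁻¹ * w') g' := fun g' =>
      ((Subgroup.mem_center_iff.mp (hcz ▸ hd)) g').symm
    have hw' : w' = w * (w⁻¹ * w') := by group
    have hcc : ⁅x, w'⁆ = ⁅x, w⁆ := by
      conv_lhs => rw [hw']
      exact comm_mul_d_right hdc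
    have hsub : (⟨⁅x, w⁆, hmem x w⟩ : ↥(commutator G)) = ⟨⁅x, w'⁆, hmem x w'⟩ :=
      Subtype.ext hcc.symm
    show Multiplicative.toAdd (χ ⟨⁅x, w⁆, hmem x w⟩)
        = Multiplicative.toAdd (χ ⟨⁅x, w'⁆, hmem x w'⟩)
    rw [hsub]
  -- a section of π
  have hsec : ∀ v : Fin k → ZMod (p ^ s), ∃ x : G, π x = Multiplicative.ofAdd v := fun v =>
    hπsurj (Multiplicative.ofAdd v)
  set σ : (Fin k → ZMod (p ^ s)) → G := fun v => (hsec v).choose with hσdef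
  have hσ : ∀ v, π (σ v) = Multiplicative.ofAdd v := fun v => (hsec v).choose_spec
  -- the descended form
  set B : (Fin k → ZMod (p ^ s)) → (Fin k → ZMod (p ^ s)) → ZMod (p ^ s) :=
    fun u v' => φ (σ u) (σ v') with hBdef
  have hBφ : ∀ x w : G, φ x w = B (Multiplicative.toAdd (π x)) (Multiplicative.toAdd (π w)) := by
    intro x w
    have h1 : π (σ (Multiplicative.toAdd (π x))) = π x := by rw [hσ]; simp
    have h2 : π (σ (Multiplicative.toAdd (π w))) = π w := by rw [hσ]; simp
    rw [hBdef]
    exact (hD_left _ _ _ h1.symm).trans (hD_right _ _ _ h2.symm)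
  have hBaddl : ∀ u u' v', B (u + u') v' = B u v' + B u' v' := by
    intro u u' v'
    have h1 : π (σ (u + u')) = π (σ u * σ u') := by
      rw [map_mul, hσ, hσ, hσ, ofAdd_add]
    calc B (u + u') v' = φ (σ u * σ u') (σ v') := hD_left _ _ _ h1
      _ = φ (σ u) (σ v') + φ (σ u') (σ v') := hφ_addl _ _ _
  have hBaddr : ∀ u v' v'', B u (v' + v'') = B u v' + B u v'' := by
    intro u v' v''
    have h1 : π (σ (v' + v'')) = π (σ v' * σ v'') := by
      rw [map_mul, hσ, hσ, hσ, ofAdd_add]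
    calc B u (v' + v'') = φ (σ u) (σ v' * σ v'') := hD_right _ _ _ h1
      _ = φ (σ u) (σ v') + φ (σ u) (σ v'') := hφ_addr _ _ _
  -- basis vectors
  set δ : Fin k → (Fin k → ZMod (p ^ s)) := fun i => fun j => if i = j then 1 else 0 with hδdef
  -- expansion of B in the left slot
  have hBexp : ∀ u v', B u v' = ∑ i, u i * B (δ i) v' := by
    intro u v'
    exact addHom_eval (AddMonoidHom.mk' (fun u' => B u' v') (fun x₁ x₂ => hBaddl x₁ x₂ v')) u
  -- the right evaluation map
  set Ψ : (Fin k → ZMod (p ^ s)) → (Fin k → ZMod (p ^ s)) := fun v' => fun i => B (δ i) v'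
    with hΨdef
  have hΨadd : ∀ v' v'', Ψ (v' + v'') = Ψ v' + Ψ v'' := by
    intro v' v''
    funext i
    exact hBaddr (δ i) v' v''
  have hφ_one : ∀ x : G, φ x 1 = 0 := by
    intro x
    exact (hφ_zero x 1).mpr (by simp)
  have hΨinj : Function.Injective Ψ := by
    intro v v' h
    have hall : ∀ u, B u v = B u v' := by
      intro u
      rw [hBexp u v, hBexp u v']
      exact Finset.sum_congr rfl fun i _ => by rw [show B (δ i) v = B (δ i) v' from congrFun h i]
    have hφall : ∀ x : G, φ x (σ v) = φ x (σ v') := by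
      intro x
      have e1 : φ x (σ v) = B (Multiplicative.toAdd (π x)) v := by
        rw [hBφ x (σ v), hσ v]
      have e2 : φ x (σ v') = B (Multiplicative.toAdd (π x)) v' := by
        rw [hBφ x (σ v'), hσ v']
      rw [e1, e2, hall]
    have hone : ∀ x : G, ⁅x, σ v * (σ v')⁻¹⁆ = 1 := by
      intro x
      have hsum : φ x (σ v') + φ x ((σ v')⁻¹) = 0 := by
        rw [← hφ_addr]
        simpa using hφ_one x
      have : φ x (σ v * (σ v')⁻¹) = 0 := by
        rw [hφ_addr, hφall x]
        exact hsum
      exact (hφ_zero _ _).mp this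
    have hcent : σ v * (σ v')⁻¹ ∈ Subgroup.center G := by
      rw [Subgroup.mem_center_iff]
      intro g'
      exact commutatorElement_eq_one_iff_mul_comm.mp (hone g')
    have hπ1 : π (σ v * (σ v')⁻¹) = 1 := (hπker _).mpr (hcz ▸ hcent)
    have : π (σ v) = π (σ v') := by
      rw [map_mul, map_inv] at hπ1
      exact mul_inv_eq_one.mp hπ1
    rw [hσ, hσ] at this
    exact Multiplicative.ofAdd.injective this
  have hΨbij : Function.Bijective Ψ := Finite.injective_iff_bijective.mp hΨinj
  set T : (Fin k → ZMod (p ^ s)) ≃ (Fin k → ZMod (p ^ s)) := Equiv.ofBijective Ψ hΨbij with hTdef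
  have hTs : ∀ c, Ψ (T.symm c) = c := fun c => T.apply_symm_apply c
  have hTadd : ∀ c c', T.symm (c + c') = T.symm c + T.symm c' := by
    intro c c'
    apply hΨinj
    rw [hΨadd, hTs, hTs, hTs]
  -- the target coordinates of y
  set yb : Fin k → ZMod (p ^ s) := Multiplicative.toAdd (π y) with hybdef
  set wv : Fin k → ZMod (p ^ s) := Ψ yb with hwvdef
  set ξ : (Fin k → ZMod (p ^ s)) →+ ZMod (p ^ s) :=
    AddMonoidHom.mk' (fun c => ∑ l, (T.symm c) l * wv l) (by
      intro c c'
      show (∑ l, (T.symm (c + c')) l * wv l)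
          = (∑ l, (T.symm c) l * wv l) + ∑ l, (T.symm c') l * wv l
      rw [hTadd]
      simp [add_mul, Finset.sum_add_distrib]) with hξdef
  set yt : Fin k → ZMod (p ^ s) := fun i => ξ (δ i) with hytdef
  have hξeval : ∀ c, ξ c = ∑ i, c i * yt i := fun c => addHom_eval ξ c
  obtain ⟨a₀, c₀, h1, h2, h3⟩ := construct_vectors (zmod_dvd_total hp) hk wv yt
  set z : ZMod (p ^ s) := Multiplicative.toAdd (χ ⟨g, hg⟩) with hzdef
  set uu : Fin k → ZMod (p ^ s) := fun i => z * a₀ i with huudef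
  set vv : Fin k → ZMod (p ^ s) := T.symm c₀ with hvvdef
  refine ⟨σ uu, σ vv, ?_, ?_, ?_⟩
  · -- ⁅σ uu, y⁆ = 1
    apply (hφ_zero _ _).mp
    have e1 : φ (σ uu) y = B uu yb := by
      rw [hBφ (σ uu) y, hσ uu]
    rw [e1, hBexp]
    have : ∀ i, uu i * B (δ i) yb = z * (a₀ i * wv i) := by
      intro i
      rw [huudef]
      show z * a₀ i * B (δ i) yb = z * (a₀ i * wv i)
      rw [show B (δ i) yb = wv i from rfl]
      ring
    rw [Finset.sum_congr rfl fun i _ => this i, ← Finset.mul_sum, h1, mul_zero]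
  · -- ⁅σ vv, y⁆ = 1
    apply (hφ_zero _ _).mp
    have e1 : φ (σ vv) y = B vv yb := by
      rw [hBφ (σ vv) y, hσ vv]
    rw [e1, hBexp]
    have e2 : (∑ i, vv i * B (δ i) yb) = ξ c₀ := by
      rw [hξdef]
      rfl
    rw [e2, hξeval, h2]
  · -- ⁅σ uu, σ vv⁆ = g
    have e1 : φ (σ uu) (σ vv) = B uu vv := by
      rw [hBφ (σ uu) (σ vv), hσ uu, hσ vv]
    have e2 : B uu vv = z := by
      rw [hBexp]
      have : ∀ i, uu i * B (δ i) vv = z * (a₀ i * c₀ i) := by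
        intro i
        have : B (δ i) vv = c₀ i := by
          rw [show B (δ i) vv = Ψ vv i from rfl, hvvdef, hTs]
        rw [this, huudef]
        show z * a₀ i * c₀ i = z * (a₀ i * c₀ i)
        ring
      rw [Finset.sum_congr rfl fun i _ => this i, ← Finset.mul_sum, h3, mul_one]
    have : φ (σ uu) (σ vv) = z := e1.trans e2
    have hfin : Multiplicative.toAdd (χ ⟨⁅σ uu, σ vv⁆, hmem _ _⟩)
        = Multiplicative.toAdd (χ ⟨g, hg⟩) := this
    have := χ.injective (Multiplicative.toAdd.injective hfin)
    exact Subtype.ext_iff.mp this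

lemma isCapable_congr {H H' : Type u} [Group H] [Group H'] (e : H ≃* H')
    (h : IsCapable H) : IsCapable H' := by
  obtain ⟨E, instE, ⟨θ⟩⟩ := h
  exact ⟨E, instE, ⟨e.symm.trans θ⟩⟩

theorem sExtraspecial_unicentral {p s r : ℕ} (hp : p.Prime) (hodd : Odd p)
    (hs : 1 ≤ s) (hr : 2 ≤ r) {G : Type} [Group G] [Finite G] (hpG : IsPGroup p G)
    (hG : IsSExtraspecial p s G) (hcard : Nat.card G = p ^ ((2 * r + 1) * s)) :
    epicenter G = Subgroup.center G ∧ ¬ IsCapable G := by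
  obtain ⟨hcz, hcyc, hcards, k, ⟨ψ⟩⟩ := hG
  haveI : NeZero (p ^ s) := ⟨pow_ne_zero _ hp.ne_zero⟩
  -- k = 2r ≥ 4
  have hcardq : Nat.card G = Nat.card (Abelianization G) * Nat.card ↥(commutator G) :=
    Subgroup.card_eq_card_quotient_mul_card_subgroup (commutator G)
  have hab : Nat.card (Abelianization G) = (p ^ s) ^ k := by
    rw [Nat.card_congr ψ.toEquiv]
    rw [Nat.card_eq_fintype_card]
    simp [ZMod.card]
  have hk3 : 3 ≤ k := by
    rw [hcard, hab, hcards, ← pow_mul, ← pow_add] at hcardq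
    have := Nat.pow_right_injective hp.two_le hcardq
    have h2 : (2 * r + 1) * s = (k + 1) * s := by rw [this]; ring
    have h3 : 2 * r + 1 = k + 1 := Nat.eq_of_mul_eq_mul_right (by omega) h2
    omega
  -- the key construction in G
  have P : ∀ (y g : G), g ∈ commutator G →
      ∃ a b : G, ⁅a, y⁆ = 1 ∧ ⁅b, y⁆ = 1 ∧ ⁅a, b⁆ = g := fun y g hg =>
    main_construction hp hk3 hcz hcyc hcards ψ y g hg
  -- any capable central quotient must kill the center
  have key : ∀ Z : Subgroup G, Z.Normal → Z ≤ Subgroup.center G →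
      (∀ (hn : Z.Normal), letI := hn; IsCapable (G ⧸ Z)) → Subgroup.center G ≤ Z := by
    intro Z hn hle hcap g hgcen
    letI := hn
    by_contra hgZ
    have hz1 : (QuotientGroup.mk g : G ⧸ Z) ≠ 1 := by
      rw [Ne, QuotientGroup.eq_one_iff]
      exact hgZ
    apply hz1
    apply capable_obstruction (hcap hn)
    intro yq
    obtain ⟨y, rfl⟩ := QuotientGroup.mk'_surjective Z yq
    obtain ⟨a, b, h1, h2, h3⟩ := P y g (hcz ▸ hgcen)
    refine ⟨QuotientGroup.mk' Z a, QuotientGroup.mk' Z b, ?_, ?_, ?_⟩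
    · rw [← map_commutatorElement, h1, map_one]
    · rw [← map_commutatorElement, h2, map_one]
    · rw [← map_commutatorElement, h3]
      rfl
  have hmain : epicenter G = Subgroup.center G := by
    apply le_antisymm
    · apply sInf_le
      refine ⟨inferInstance, le_refl _, ⟨G, ‹Group G›, ⟨?_⟩⟩⟩
      exact MulEquiv.refl _
    · apply le_sInf
      rintro Z ⟨hn, hle, hcap⟩
      exact key Z hn hle (fun _ => hcap)
  refine ⟨hmain, ?_⟩
  intro hcap
  have hbot : (⊥ : Subgroup G) ∈ {Z : Subgroup G | ∃ hn : Z.Normal, Z ≤ Subgroup.center G ∧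
      (letI := hn; IsCapable (G ⧸ Z))} := by
    refine ⟨inferInstance, bot_le, ?_⟩
    exact isCapable_congr (QuotientGroup.quotientBot (G := G)).symm hcap
  have : epicenter G ≤ ⊥ := sInf_le hbot
  rw [hmain] at this
  have hcen1 : Subgroup.center G = ⊥ := le_bot_iff.mp this
  have : Nat.card ↥(commutator G) = 1 := by
    rw [hcz, hcen1]
    simp
  rw [hcards] at this
  have : 1 < p ^ s := Nat.one_lt_pow (by omega) hp.one_lt
  omega
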